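/- Let φ : ℍ → ℍ be holomorphic and suppose the function z ↦ φ(z) − λ⁻¹ z has nonnegative real part on ℍ for some λ > 0. Then the kernel K(z,w) = 1/(z + conj w) − λ⁻¹/(φ(z) + conj(φ(w))) is a positive kernel on ℍ. -/

import Mathlib

open Complex MeasureTheory Filter Topology Set
open Metric intervalIntegral

noncomputable section

/-- The open right half-plane. -/
def RHP : Set ℂ := {z : ℂ | 0 < z.re}

/-- The Szegő kernel of the right half-plane: `kern w z = k_w(z) = 1/(z + conj w)`. -/
def kern (w z : ℂ) : ℂ := 1 / (z + (starRingEnd ℂ) w)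

/-- The mean of `|f|^2` on the vertical line `Re = x`. -/
def hardyMean2 (f : ℂ → ℂ) (x : ℝ) : ℝ :=
  (1 / (2 * Real.pi)) * ∫ y : ℝ, ‖f (x + y * Complex.I)‖ ^ 2

/-- Membership in the Hardy space `H²(ℍ)` of the right half-plane. -/
def MemHardy2 (f : ℂ → ℂ) : Prop :=
  DifferentiableOn ℂ f RHP ∧ ∃ C : ℝ, ∀ x : ℝ, 0 < x → hardyMean2 f x ≤ C

/-- The squared `H²` norm, as the supremum of the vertical-line means. -/
def hardyNormSq (f : ℂ → ℂ) : ℝ :=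
  sSup {m : ℝ | ∃ x : ℝ, 0 < x ∧ m = hardyMean2 f x}

/-- `HardyInnerTendsto f g L` says the `H²(ℍ)` inner product `⟨f, g⟩` equals `L`,
realized as a limit of inner products over vertical lines `Re = x` as `x → 0⁺`. -/
def HardyInnerTendsto (f g : ℂ → ℂ) (L : ℂ) : Prop :=
  Tendsto (fun x : ℝ => ((1 / (2 * Real.pi) : ℝ) : ℂ) *
      ∫ y : ℝ, f (x + y * Complex.I) * (starRingEnd ℂ) (g (x + y * Complex.I)))
    (𝓝[>] (0 : ℝ)) (𝓝 L)

/-- The composition operator `C_φ : f ↦ f ∘ φ` is bounded on `H²(ℍ)` with bound `M`. -/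
def CompBoundedBy (φ : ℂ → ℂ) (M : ℝ) : Prop :=
  ∀ f : ℂ → ℂ, MemHardy2 f →
    MemHardy2 (f ∘ φ) ∧ hardyNormSq (f ∘ φ) ≤ M ^ 2 * hardyNormSq f

/-- The operator norm of the composition operator `C_φ` on `H²(ℍ)`. -/
def compNorm (φ : ℂ → ℂ) : ℝ :=
  sInf {M : ℝ | 0 ≤ M ∧ CompBoundedBy φ M}

/-- A kernel `K : X × X → ℂ` is positive if every finite Gram sum
`∑ᵢⱼ cᵢ conj(cⱼ) K(xᵢ,xⱼ)` is real and nonnegative. -/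
def IsPosKernel {X : Type*} (K : X → X → ℂ) : Prop :=
  ∀ (n : ℕ) (c : Fin n → ℂ) (x : Fin n → X),
    0 ≤ (∑ i, ∑ j, c i * (starRingEnd ℂ) (c j) * K (x i) (x j)).re ∧
    (∑ i, ∑ j, c i * (starRingEnd ℂ) (c j) * K (x i) (x j)).im = 0

lemma intervalIntegral_conj {f : ℝ → ℂ} {a b : ℝ} :
    (∫ t in a..b, (starRingEnd ℂ) (f t)) = (starRingEnd ℂ) (∫ t in a..b, f t) := by
  rw [intervalIntegral_eq_integral_uIoc, intervalIntegral_eq_integral_uIoc, integral_conj]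
  rcases le_or_gt a b with h | h
  · simp [h]
  · simp [h.not_ge]

/-- continuity helper -/
lemma cont_piece {ψ : ℂ → ℂ} {a r : ℝ} (hr : 0 < r)
    (hψc : ContinuousOn ψ (closedBall (a : ℂ) r)) (γ δ : ℂ) (hγ : ‖γ‖ < r) (hδ : ‖δ‖ < r) :
    Continuous (fun t : ℝ => ψ ((a : ℂ) + circleMap 0 r t) * circleMap 0 r t /
      ((circleMap 0 r t - γ) * ((r : ℂ) ^ 2 - (starRingEnd ℂ) δ * circleMap 0 r t))) := by
  have hmem : ∀ t : ℝ, (a : ℂ) + circleMap 0 r t ∈ closedBall (a : ℂ) r := by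
    intro t
    simp [mem_closedBall, dist_eq, norm_circleMap_zero, abs_of_pos hr]
  have h1 : Continuous (fun t : ℝ => ψ ((a : ℂ) + circleMap 0 r t)) := by
    apply hψc.comp_continuous (by continuity) hmem
  have hden : ∀ t : ℝ, (circleMap 0 r t - γ) * ((r : ℂ) ^ 2 - (starRingEnd ℂ) δ * circleMap 0 r t) ≠ 0 := by
    intro t
    apply mul_ne_zero
    · intro h
      have : ‖circleMap 0 r t‖ = r := by simp [norm_circleMap_zero, abs_of_pos hr]
      rw [sub_eq_zero] at h
      rw [h] at this; exact absurd this (ne_of_lt hγ)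
    · intro h
      rw [sub_eq_zero] at h
      have h2 : ‖(r:ℂ)^2‖ = r^2 := by
        simp [abs_of_pos hr]
      have h3 : ‖(starRingEnd ℂ) δ * circleMap 0 r t‖ = ‖δ‖ * r := by
        simp [norm_circleMap_zero, abs_of_pos hr]
      rw [h, h3] at h2
      nlinarith [norm_nonneg δ]
  exact (h1.mul (continuous_circleMap 0 r)).div (by continuity) hden

lemma cauchy_piece {ψ : ℂ → ℂ} {a r : ℝ} (hr : 0 < r)
    (hψ : DifferentiableOn ℂ ψ (closedBall (a : ℂ) r)) (γ δ : ℂ) (hγ : ‖γ‖ < r) (hδ : ‖δ‖ < r) :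
    (∫ t in (0:ℝ)..(2 * Real.pi), ψ ((a : ℂ) + circleMap 0 r t) * circleMap 0 r t /
      ((circleMap 0 r t - γ) * ((r : ℂ) ^ 2 - (starRingEnd ℂ) δ * circleMap 0 r t)))
      = 2 * Real.pi * ψ ((a : ℂ) + γ) / ((r : ℂ) ^ 2 - γ * (starRingEnd ℂ) δ) := by
  have hane : ∀ ζ ∈ closedBall (a : ℂ) r, (r : ℂ) ^ 2 - (starRingEnd ℂ) δ * (ζ - a) ≠ 0 := by
    intro ζ hζ h
    rw [sub_eq_zero] at h
    have h1 : ‖(r:ℂ)^2‖ = r^2 := by simp [abs_of_pos hr]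
    have h2 : ‖(starRingEnd ℂ) δ * (ζ - ↑a)‖ ≤ ‖δ‖ * r := by
      rw [norm_mul, RCLike.norm_conj]
      exact mul_le_mul_of_nonneg_left (by simpa [dist_eq] using mem_closedBall.1 hζ) (norm_nonneg δ)
    have h3 := congrArg norm h
    rw [h1] at h3
    rw [← h3] at h2
    nlinarith [norm_nonneg δ]
  set f : ℂ → ℂ := fun ζ => ψ ζ / ((r : ℂ) ^ 2 - (starRingEnd ℂ) δ * (ζ - ↑a)) with hfdef
  have hfd : DifferentiableOn ℂ f (closedBall (↑a) r) := by
    apply hψ.div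
    · exact ((differentiable_const _).sub (((differentiable_id).sub_const _).const_mul _)).differentiableOn
    · exact hane
  have hw : (↑a + γ : ℂ) ∈ ball (↑a : ℂ) r := by
    simp [mem_ball, dist_eq]
    simpa using hγ
  have key := hfd.circleIntegral_sub_inv_smul hw
  simp only [circleIntegral, deriv_circleMap, smul_eq_mul] at key
  have hptw : ∀ t : ℝ, circleMap 0 r t * I * ((circleMap (↑a) r t - (↑a + γ))⁻¹ * f (circleMap (↑a) r t))
      = I * (ψ ((a : ℂ) + circleMap 0 r t) * circleMap 0 r t /
        ((circleMap 0 r t - γ) * ((r : ℂ) ^ 2 - (starRingEnd ℂ) δ * circleMap 0 r t))) := by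
    intro t
    have h1 : circleMap (↑a) r t = ↑a + circleMap 0 r t := by simp [circleMap]
    rw [h1, hfdef]
    simp only [add_sub_add_left_eq_sub, add_sub_cancel_left]
    rw [div_eq_mul_inv, div_eq_mul_inv, mul_inv]
    ring
  rw [intervalIntegral.integral_congr (fun t _ => hptw t)] at key
  rw [intervalIntegral.integral_const_mul] at key
  refine mul_left_cancel₀ I_ne_zero ?_
  rw [key, hfdef]
  simp only [add_sub_cancel_left]
  rw [mul_comm γ ((starRingEnd ℂ) δ)]
  ring

lemma den_ne {r : ℝ} (hr : 0 < r) {δ : ℂ} (hδ : ‖δ‖ < r) (t : ℝ) :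
    (r : ℂ) ^ 2 - (starRingEnd ℂ) δ * circleMap 0 r t ≠ 0 := by
  intro h
  rw [sub_eq_zero] at h
  have h3 := congrArg norm h
  have h1 : ‖(r:ℂ)^2‖ = r^2 := by simp [abs_of_pos hr]
  have h2 : ‖(starRingEnd ℂ) δ * circleMap 0 r t‖ = ‖δ‖ * r := by
    simp [norm_circleMap_zero, abs_of_pos hr]
  rw [h1, h2] at h3
  nlinarith [norm_nonneg δ]

lemma circle_sub_ne {r : ℝ} (hr : 0 < r) {γ : ℂ} (hγ : ‖γ‖ < r) (t : ℝ) :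
    circleMap 0 r t - γ ≠ 0 := by
  intro h
  rw [sub_eq_zero] at h
  have : ‖circleMap 0 r t‖ = r := by
    simp [norm_circleMap_zero, abs_of_pos hr]
  rw [h] at this
  exact absurd this (ne_of_lt hγ)

lemma pair_integral {ψ : ℂ → ℂ} {a r : ℝ} (hr : 0 < r)
    (hψ : DifferentiableOn ℂ ψ (closedBall (a : ℂ) r)) (α β : ℂ) (hα : ‖α‖ < r) (hβ : ‖β‖ < r) :
    (∫ t in (0:ℝ)..(2 * Real.pi), (((ψ ((a : ℂ) + circleMap 0 r t)).re : ℂ)) /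
      ((circleMap 0 r t - α) * (starRingEnd ℂ) (circleMap 0 r t - β)))
    = Real.pi * (ψ ((a : ℂ) + α) + (starRingEnd ℂ) (ψ ((a : ℂ) + β))) /
        ((r : ℂ) ^ 2 - α * (starRingEnd ℂ) β) := by
  have hptw : ∀ t ∈ uIcc (0:ℝ) (2 * Real.pi),
      (((ψ ((a : ℂ) + circleMap 0 r t)).re : ℂ)) /
        ((circleMap 0 r t - α) * (starRingEnd ℂ) (circleMap 0 r t - β))
      = (ψ ((a : ℂ) + circleMap 0 r t) * circleMap 0 r t /
            ((circleMap 0 r t - α) * ((r : ℂ) ^ 2 - (starRingEnd ℂ) β * circleMap 0 r t))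
          + (starRingEnd ℂ) (ψ ((a : ℂ) + circleMap 0 r t) * circleMap 0 r t /
            ((circleMap 0 r t - β) * ((r : ℂ) ^ 2 - (starRingEnd ℂ) α * circleMap 0 r t)))) / 2 := by
    intro t _
    set u := circleMap 0 r t with hudef
    set v := (starRingEnd ℂ) u with hvdef
    set X := ψ ((a : ℂ) + u) with hXdef
    have huv : u * v = (r : ℂ) ^ 2 := by
      rw [hvdef, Complex.mul_conj, Complex.normSq_eq_norm_sq, hudef, norm_circleMap_zero,
        abs_of_pos hr]
      push_cast; ring
    have hu0 : u ≠ 0 := by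
      intro h; rw [h, zero_mul] at huv
      exact (pow_ne_zero 2 (Complex.ofReal_ne_zero.2 hr.ne')) huv.symm
    have hv0 : v ≠ 0 := by simpa [hvdef] using hu0
    have huα : u - α ≠ 0 := circle_sub_ne hr hα t
    have huβ : u - β ≠ 0 := circle_sub_ne hr hβ t
    have hvβ : v - (starRingEnd ℂ) β ≠ 0 := by
      intro h
      apply huβ
      have := congrArg (starRingEnd ℂ) h
      simpa [hvdef] using this
    have hvα : v - (starRingEnd ℂ) α ≠ 0 := by
      intro h
      apply huα
      have := congrArg (starRingEnd ℂ) h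
      simpa [hvdef] using this
    have hre : ((X.re : ℂ)) = (X + (starRingEnd ℂ) X) / 2 := by
      rw [Complex.add_conj]; push_cast; ring
    have hconj2 : (starRingEnd ℂ) (X * u / ((u - β) * ((r : ℂ) ^ 2 - (starRingEnd ℂ) α * u)))
        = (starRingEnd ℂ) X * v / ((v - (starRingEnd ℂ) β) * ((r : ℂ) ^ 2 - α * v)) := by
      simp only [map_div₀, map_mul, map_sub, map_pow, Complex.conj_ofReal, Complex.conj_conj,
        ← hvdef]
    rw [hconj2, hre, ← huv]
    have e1 : u * v - (starRingEnd ℂ) β * u = u * (v - (starRingEnd ℂ) β) := by ring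
    have e2 : u * v - α * v = v * (u - α) := by ring
    rw [e1, e2]
    have t1 : X * u / ((u - α) * (u * (v - (starRingEnd ℂ) β)))
        = X / ((u - α) * (v - (starRingEnd ℂ) β)) := by
      rw [mul_comm X u, show (u - α) * (u * (v - (starRingEnd ℂ) β))
        = u * ((u - α) * (v - (starRingEnd ℂ) β)) from by ring, mul_div_mul_left _ _ hu0]
    have t2 : (starRingEnd ℂ) X * v / ((v - (starRingEnd ℂ) β) * (v * (u - α)))
        = (starRingEnd ℂ) X / ((u - α) * (v - (starRingEnd ℂ) β)) := by
      rw [mul_comm ((starRingEnd ℂ) X) v, show (v - (starRingEnd ℂ) β) * (v * (u - α))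
        = v * ((u - α) * (v - (starRingEnd ℂ) β)) from by ring, mul_div_mul_left _ _ hv0]
    rw [t1, t2, ← add_div, div_right_comm]
    simp only [map_sub, ← hvdef]
  rw [intervalIntegral.integral_congr hptw]
  have hψc : ContinuousOn ψ (closedBall (a : ℂ) r) := hψ.continuousOn
  rw [intervalIntegral.integral_div]
  rw [intervalIntegral.integral_add ((cont_piece hr hψc α β hα hβ).intervalIntegrable _ _)
    (Continuous.intervalIntegrable
      (by exact Complex.continuous_conj.comp (cont_piece hr hψc β α hβ hα)) _ _)]
  rw [_root_.intervalIntegral_conj, cauchy_piece hr hψ α β hα hβ, cauchy_piece hr hψ β α hβ hα]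
  have hd : ((r : ℂ) ^ 2 - α * (starRingEnd ℂ) β) ≠ 0 := by
    intro h
    rw [sub_eq_zero] at h
    have h3 := congrArg norm h
    have h1 : ‖(r:ℂ)^2‖ = r^2 := by simp [abs_of_pos hr]
    have h2 : ‖α * (starRingEnd ℂ) β‖ = ‖α‖ * ‖β‖ := by simp
    rw [h1, h2] at h3
    nlinarith [norm_nonneg α, norm_nonneg β]
  simp only [map_div₀, map_mul, map_sub, map_pow, Complex.conj_ofReal, Complex.conj_conj,
    map_ofNat]
  rw [show (starRingEnd ℂ) β * α = α * (starRingEnd ℂ) β from by ring]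
  field_simp

lemma circle_add_mem {a r : ℝ} (hr : 0 < r) (t : ℝ) :
    (a : ℂ) + circleMap 0 r t ∈ closedBall (a : ℂ) r := by
  simp [mem_closedBall, dist_eq, norm_circleMap_zero, abs_of_pos hr]

lemma cont_piece2 {ψ : ℂ → ℂ} {a r : ℝ} (hr : 0 < r)
    (hψc : ContinuousOn ψ (closedBall (a : ℂ) r)) (γ δ : ℂ) (hγ : ‖γ‖ < r) (hδ : ‖δ‖ < r) :
    Continuous (fun t : ℝ => (((ψ ((a : ℂ) + circleMap 0 r t)).re : ℂ)) /
      ((circleMap 0 r t - γ) * (starRingEnd ℂ) (circleMap 0 r t - δ))) := by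
  have h1 : Continuous (fun t : ℝ => ψ ((a : ℂ) + circleMap 0 r t)) :=
    hψc.comp_continuous (by continuity) (circle_add_mem hr)
  refine Continuous.div ?_ (by continuity) ?_
  · exact Complex.continuous_ofReal.comp (Complex.continuous_re.comp h1)
  · intro t
    exact mul_ne_zero (circle_sub_ne hr hγ t)
      ((map_ne_zero (starRingEnd ℂ)).2 (circle_sub_ne hr hδ t))

lemma core_disk {ψ : ℂ → ℂ} {a r : ℝ} (hr : 0 < r)
    (hψ : DifferentiableOn ℂ ψ (closedBall (a : ℂ) r))
    (hre : ∀ ζ ∈ closedBall (a : ℂ) r, 0 ≤ (ψ ζ).re)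
    {n : ℕ} (c : Fin n → ℂ) (x : Fin n → ℂ) (hx : ∀ i, ‖x i - (a : ℂ)‖ < r) :
    0 ≤ (∑ i, ∑ j, c i * (starRingEnd ℂ) (c j) *
        ((ψ (x i) + (starRingEnd ℂ) (ψ (x j))) /
          ((r : ℂ) ^ 2 - (x i - (a : ℂ)) * (starRingEnd ℂ) (x j - (a : ℂ))))).re ∧
      (∑ i, ∑ j, c i * (starRingEnd ℂ) (c j) *
        ((ψ (x i) + (starRingEnd ℂ) (ψ (x j))) /
          ((r : ℂ) ^ 2 - (x i - (a : ℂ)) * (starRingEnd ℂ) (x j - (a : ℂ))))).im = 0 := by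
  have hψc : ContinuousOn ψ (closedBall (a : ℂ) r) := hψ.continuousOn
  set F : Fin n → Fin n → ℝ → ℂ := fun i j t =>
    (((ψ ((a : ℂ) + circleMap 0 r t)).re : ℂ)) /
      ((circleMap 0 r t - (x i - (a : ℂ))) *
        (starRingEnd ℂ) (circleMap 0 r t - (x j - (a : ℂ)))) with hF
  have hπ : (Real.pi : ℂ) ≠ 0 := Complex.ofReal_ne_zero.2 Real.pi_ne_zero
  have key : ∀ i j, (ψ (x i) + (starRingEnd ℂ) (ψ (x j))) /
      ((r : ℂ) ^ 2 - (x i - (a : ℂ)) * (starRingEnd ℂ) (x j - (a : ℂ)))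
      = (Real.pi : ℂ)⁻¹ * ∫ t in (0:ℝ)..(2 * Real.pi), F i j t := by
    intro i j
    rw [hF]
    rw [pair_integral hr hψ (x i - (a : ℂ)) (x j - (a : ℂ)) (hx i) (hx j)]
    simp only [add_sub_cancel]
    field_simp
  have hcont : ∀ i j, Continuous (fun t => c i * (starRingEnd ℂ) (c j) * F i j t) := by
    intro i j
    exact continuous_const.mul (cont_piece2 hr hψc _ _ (hx i) (hx j))
  have swap : (∑ i, ∑ j, c i * (starRingEnd ℂ) (c j) *
      ((ψ (x i) + (starRingEnd ℂ) (ψ (x j))) /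
        ((r : ℂ) ^ 2 - (x i - (a : ℂ)) * (starRingEnd ℂ) (x j - (a : ℂ)))))
      = (Real.pi : ℂ)⁻¹ * ∫ t in (0:ℝ)..(2 * Real.pi),
          ∑ i, ∑ j, c i * (starRingEnd ℂ) (c j) * F i j t := by
    rw [intervalIntegral.integral_finset_sum
      (fun i _ => (continuous_finset_sum _ (fun j _ => hcont i j)).intervalIntegrable _ _)]
    rw [Finset.mul_sum]
    refine Finset.sum_congr rfl (fun i _ => ?_)
    rw [intervalIntegral.integral_finset_sum (fun j _ => (hcont i j).intervalIntegrable _ _)]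
    rw [Finset.mul_sum]
    refine Finset.sum_congr rfl (fun j _ => ?_)
    rw [key i j, intervalIntegral.integral_const_mul]
    ring
  set h : ℝ → ℝ := fun t => (ψ ((a : ℂ) + circleMap 0 r t)).re *
    Complex.normSq (∑ i, c i / (circleMap 0 r t - (x i - (a : ℂ)))) with hh
  have hptw : ∀ t : ℝ, (∑ i, ∑ j, c i * (starRingEnd ℂ) (c j) * F i j t) = ((h t : ℝ) : ℂ) := by
    intro t
    rw [hh, hF]
    have e1 : (∑ i, ∑ j, c i * (starRingEnd ℂ) (c j) *
        ((((ψ ((a : ℂ) + circleMap 0 r t)).re : ℂ)) /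
          ((circleMap 0 r t - (x i - (a : ℂ))) *
            (starRingEnd ℂ) (circleMap 0 r t - (x j - (a : ℂ))))))
        = (((ψ ((a : ℂ) + circleMap 0 r t)).re : ℂ)) *
          ((∑ i, c i / (circleMap 0 r t - (x i - (a : ℂ)))) *
            (starRingEnd ℂ) (∑ j, c j / (circleMap 0 r t - (x j - (a : ℂ))))) := by
      simp only [map_sum, Finset.mul_sum, Finset.sum_mul, map_div₀]
      rw [Finset.sum_comm]
      refine Finset.sum_congr rfl (fun i _ => ?_)
      refine Finset.sum_congr rfl (fun j _ => ?_)
      rw [div_eq_mul_inv, mul_inv]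
      ring
    rw [e1, Complex.mul_conj, ← Complex.ofReal_mul]
  have hS : (∑ i, ∑ j, c i * (starRingEnd ℂ) (c j) *
      ((ψ (x i) + (starRingEnd ℂ) (ψ (x j))) /
        ((r : ℂ) ^ 2 - (x i - (a : ℂ)) * (starRingEnd ℂ) (x j - (a : ℂ)))))
      = (((Real.pi)⁻¹ * ∫ t in (0:ℝ)..(2 * Real.pi), h t : ℝ) : ℂ) := by
    rw [swap, intervalIntegral.integral_congr (fun t _ => hptw t)]
    rw [intervalIntegral.integral_ofReal]
    push_cast
    ring
  have hint : 0 ≤ ∫ t in (0:ℝ)..(2 * Real.pi), h t := by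
    apply intervalIntegral.integral_nonneg (by positivity)
    intro u _
    exact mul_nonneg (hre _ (circle_add_mem hr u)) (Complex.normSq_nonneg _)
  constructor
  · rw [hS, Complex.ofReal_re]
    have : (0:ℝ) ≤ (Real.pi)⁻¹ := by positivity
    exact mul_nonneg this hint
  · rw [hS, Complex.ofReal_im]

lemma tendsto_entry {z w : ℂ} (hz : 0 < z.re) (hw : 0 < w.re) :
    Tendsto (fun a : ℝ => (a : ℂ) /
      (((a - 1/a : ℝ) : ℂ)^2 - (z - (a : ℂ)) * (starRingEnd ℂ) (w - (a : ℂ))))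
      atTop (𝓝 (1 / (z + (starRingEnd ℂ) w))) := by
  have hs : z + (starRingEnd ℂ) w ≠ 0 := by
    intro h
    have := congrArg Complex.re h
    simp [Complex.add_re, Complex.conj_re] at this
    linarith
  have hv : Tendsto (fun a : ℝ => ((a : ℂ))⁻¹) atTop (𝓝 0) := by
    have h0 : Tendsto (fun a : ℝ => a⁻¹) atTop (𝓝 (0:ℝ)) := tendsto_inv_atTop_zero
    have := (Complex.continuous_ofReal.tendsto (0:ℝ)).comp h0
    simpa [Function.comp_def, Complex.ofReal_inv] using this
  have hmain : Tendsto (fun a : ℝ => (z + (starRingEnd ℂ) w) +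
      (-2 + ((a : ℂ))⁻¹^2 - z * (starRingEnd ℂ) w) * ((a : ℂ))⁻¹) atTop
      (𝓝 (z + (starRingEnd ℂ) w)) := by
    have h2 : Tendsto (fun a : ℝ => (-2 + ((a : ℂ))⁻¹^2 - z * (starRingEnd ℂ) w) * ((a : ℂ))⁻¹)
        atTop (𝓝 ((-2 + 0^2 - z * (starRingEnd ℂ) w) * 0)) :=
      (((tendsto_const_nhds).add (hv.pow 2)).sub tendsto_const_nhds).mul hv
    have h3 := (tendsto_const_nhds (x := z + (starRingEnd ℂ) w) (f := atTop)).add h2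
    simpa using h3
  have hfin := hmain.inv₀ hs
  rw [show (1 / (z + (starRingEnd ℂ) w)) = (z + (starRingEnd ℂ) w)⁻¹ from one_div _]
  apply hfin.congr'
  filter_upwards [eventually_ge_atTop (1:ℝ)] with a ha
  have ha0 : (a : ℂ) ≠ 0 := Complex.ofReal_ne_zero.2 (by linarith)
  have hE : (((a - 1/a : ℝ) : ℂ)^2 - (z - (a : ℂ)) * (starRingEnd ℂ) (w - (a : ℂ)))
      * ((a : ℂ))⁻¹
      = (z + (starRingEnd ℂ) w) + (-2 + ((a : ℂ))⁻¹^2 - z * (starRingEnd ℂ) w) * ((a : ℂ))⁻¹ := by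
    simp only [map_sub, Complex.conj_ofReal]
    push_cast
    field_simp
    ring
  rw [← hE, mul_inv, inv_inv]
  ring

lemma herglotz_pos {ψ : ℂ → ℂ} (hψ : DifferentiableOn ℂ ψ RHP)
    (hre : ∀ z ∈ RHP, 0 ≤ (ψ z).re) {n : ℕ} (c : Fin n → ℂ) (x : Fin n → ℂ)
    (hx : ∀ i, x i ∈ RHP) :
    0 ≤ (∑ i, ∑ j, c i * (starRingEnd ℂ) (c j) *
        ((ψ (x i) + (starRingEnd ℂ) (ψ (x j))) / (x i + (starRingEnd ℂ) (x j)))).re ∧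
    (∑ i, ∑ j, c i * (starRingEnd ℂ) (c j) *
        ((ψ (x i) + (starRingEnd ℂ) (ψ (x j))) / (x i + (starRingEnd ℂ) (x j)))).im = 0 := by
  have hxre : ∀ i, 0 < (x i).re := fun i => hx i
  set T := ∑ i, ∑ j, c i * (starRingEnd ℂ) (c j) *
      ((ψ (x i) + (starRingEnd ℂ) (ψ (x j))) / (x i + (starRingEnd ℂ) (x j))) with hT
  set S : ℝ → ℂ := fun a => (a : ℂ) * ∑ i, ∑ j, c i * (starRingEnd ℂ) (c j) *
      ((ψ (x i) + (starRingEnd ℂ) (ψ (x j))) /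
        (((a - 1/a : ℝ) : ℂ)^2 - (x i - (a : ℂ)) * (starRingEnd ℂ) (x j - (a : ℂ)))) with hSdef
  -- eventual positivity
  have hev : ∀ᶠ a : ℝ in atTop, (2 ≤ a ∧ ∀ i, ‖x i - (a : ℂ)‖ < a - 1/a) := by
    have h1 : ∀ i, ∀ᶠ a : ℝ in atTop, ‖x i - (a : ℂ)‖ < a - 1/a := by
      intro i
      filter_upwards [eventually_ge_atTop
        (max 2 ((Complex.normSq (x i) + 2) / (2 * (x i).re)))] with a ha
      have ha2 : (2:ℝ) ≤ a := le_trans (le_max_left _ _) ha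
      have ha3 : (Complex.normSq (x i) + 2) / (2 * (x i).re) ≤ a :=
        le_trans (le_max_right _ _) ha
      have hrei := hxre i
      have hkey : Complex.normSq (x i) + 2 ≤ 2 * (x i).re * a := by
        rw [div_le_iff₀ (by positivity)] at ha3
        linarith
      have hnormsq : ‖x i - (a : ℂ)‖^2 = ((x i).re - a)^2 + (x i).im^2 := by
        rw [Complex.sq_norm, Complex.normSq_apply]
        simp
        ring
      have hns : Complex.normSq (x i) = (x i).re^2 + (x i).im^2 := by
        rw [Complex.normSq_apply]; ring
      have hpos : 0 < a - 1/a := by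
        have : 1/a ≤ 1/2 := by
          apply one_div_le_one_div_of_le <;> linarith
        linarith
      have hinva : a * (1/a) = 1 := by
        field_simp
      refine lt_of_pow_lt_pow_left₀ 2 hpos.le ?_
      rw [hnormsq]
      rw [hns] at hkey
      have hia : 0 < (1/a)^2 := by positivity
      have hexp : (a - 1/a)^2 = a^2 - 2*(a*(1/a)) + (1/a)^2 := by ring
      rw [hinva] at hexp
      nlinarith [hkey, hia, hexp]
    have h2 := (Filter.eventually_all.2 h1)
    exact (eventually_ge_atTop (2:ℝ)).and h2
  have hev2 : ∀ᶠ a : ℝ in atTop, 0 ≤ (S a).re ∧ (S a).im = 0 := by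
    filter_upwards [hev] with a ⟨ha2, hball⟩
    have hr : 0 < a - 1/a := by
      have : 1/a ≤ 1/2 := by
        apply one_div_le_one_div_of_le <;> linarith
      linarith
    have hsub : closedBall ((a:ℝ) : ℂ) (a - 1/a) ⊆ RHP := by
      intro ζ hζ
      have h1 : |(ζ - (a:ℂ)).re| ≤ ‖ζ - (a:ℂ)‖ := Complex.abs_re_le_norm _
      have h2 : ‖ζ - (a:ℂ)‖ ≤ a - 1/a := by
        simpa [dist_eq] using mem_closedBall.1 hζ
      have h3 : (ζ - (a:ℂ)).re = ζ.re - a := by simp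
      have h4 : 0 < (1:ℝ)/a := by positivity
      show 0 < ζ.re
      rw [h3] at h1
      cases' abs_le.1 h1 with h5 h6
      linarith
    have := core_disk (a := a) (r := a - 1/a) hr (hψ.mono hsub)
      (fun ζ hζ => hre ζ (hsub hζ)) c x hball
    simp only [hSdef]
    constructor
    · rw [Complex.re_ofReal_mul]
      exact mul_nonneg (by linarith) this.1
    · rw [Complex.im_ofReal_mul, this.2, mul_zero]
  -- limit
  have hlim : Tendsto S atTop (𝓝 T) := by
    have hSeq : ∀ a : ℝ, S a = ∑ i, ∑ j, c i * (starRingEnd ℂ) (c j) *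
        ((ψ (x i) + (starRingEnd ℂ) (ψ (x j))) * ((a : ℂ) /
          (((a - 1/a : ℝ) : ℂ)^2 - (x i - (a : ℂ)) * (starRingEnd ℂ) (x j - (a : ℂ))))) := by
      intro a
      simp only [hSdef]
      rw [Finset.mul_sum]
      refine Finset.sum_congr rfl (fun i _ => ?_)
      rw [Finset.mul_sum]
      refine Finset.sum_congr rfl (fun j _ => ?_)
      ring
    rw [show Tendsto S atTop (𝓝 T) ↔ Tendsto (fun a : ℝ => ∑ i, ∑ j,
        c i * (starRingEnd ℂ) (c j) * ((ψ (x i) + (starRingEnd ℂ) (ψ (x j))) * ((a : ℂ) /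
          (((a - 1/a : ℝ) : ℂ)^2 - (x i - (a : ℂ)) * (starRingEnd ℂ) (x j - (a : ℂ))))))
        atTop (𝓝 T) from by
      constructor
      · intro h; exact h.congr (fun a => hSeq a)
      · intro h; exact h.congr (fun a => (hSeq a).symm)]
    rw [hT]
    apply tendsto_finset_sum
    intro i _
    apply tendsto_finset_sum
    intro j _
    have := (tendsto_entry (hxre i) (hxre j)).const_mul
      (c i * (starRingEnd ℂ) (c j) * (ψ (x i) + (starRingEnd ℂ) (ψ (x j))))
    rw [show c i * (starRingEnd ℂ) (c j) * ((ψ (x i) + (starRingEnd ℂ) (ψ (x j))) /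
        (x i + (starRingEnd ℂ) (x j)))
        = c i * (starRingEnd ℂ) (c j) * (ψ (x i) + (starRingEnd ℂ) (ψ (x j))) *
          (1 / (x i + (starRingEnd ℂ) (x j))) from by ring]
    refine this.congr (fun a => ?_)
    ring
  constructor
  · have hre' : Tendsto (fun a => (S a).re) atTop (𝓝 T.re) :=
      (Complex.continuous_re.tendsto T).comp hlim
    exact ge_of_tendsto hre' (hev2.mono (fun a h => h.1))
  · have him : Tendsto (fun a => (S a).im) atTop (𝓝 T.im) :=
      (Complex.continuous_im.tendsto T).comp hlim
    have him0 : Tendsto (fun a => (S a).im) atTop (𝓝 (0:ℝ)) :=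
      Tendsto.congr' (show (fun _ : ℝ => (0:ℝ)) =ᶠ[atTop] fun a => (S a).im from
        hev2.mono fun a h => h.2.symm) tendsto_const_nhds
    exact tendsto_nhds_unique him him0

lemma ne_zero_of_re_pos {z : ℂ} (h : 0 < z.re) : z ≠ 0 := by
  intro h0; rw [h0] at h; simp at h

lemma pair_id {lam : ℝ} (hlam : 0 < lam) {z w p q : ℂ} (hz : 0 < z.re) (hw : 0 < w.re)
    (hp : 0 < p.re) (hq : 0 < q.re) :
    ((p - ((lam:ℂ))⁻¹ * z) + (starRingEnd ℂ) (q - ((lam:ℂ))⁻¹ * w)) / (z + (starRingEnd ℂ) w) *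
      (2 * (p + 1)⁻¹ * (starRingEnd ℂ) ((q + 1)⁻¹)) *
      (1 - ((p - 1) * (p + 1)⁻¹) * (starRingEnd ℂ) ((q - 1) * (q + 1)⁻¹))⁻¹
    = 1 / (z + (starRingEnd ℂ) w) - ((lam:ℂ))⁻¹ / (p + (starRingEnd ℂ) q) := by
  have hzw : z + (starRingEnd ℂ) w ≠ 0 := by
    apply _root_.ne_zero_of_re_pos; simp [Complex.add_re, Complex.conj_re]; linarith
  have hpq : p + (starRingEnd ℂ) q ≠ 0 := by
    apply _root_.ne_zero_of_re_pos; simp [Complex.add_re, Complex.conj_re]; linarith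
  have hp1 : p + 1 ≠ 0 := by
    apply _root_.ne_zero_of_re_pos; simp [Complex.add_re]; linarith
  have hq1 : (starRingEnd ℂ) q + 1 ≠ 0 := by
    apply _root_.ne_zero_of_re_pos; simp [Complex.add_re, Complex.conj_re]; linarith
  have hlam0 : ((lam:ℂ)) ≠ 0 := Complex.ofReal_ne_zero.2 hlam.ne'
  have hconjq : (starRingEnd ℂ) ((q - 1) * (q + 1)⁻¹)
      = ((starRingEnd ℂ) q - 1) * ((starRingEnd ℂ) q + 1)⁻¹ := by
    simp [map_mul, map_sub, map_inv₀]
  have hE : 1 - ((p - 1) * (p + 1)⁻¹) * (starRingEnd ℂ) ((q - 1) * (q + 1)⁻¹)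
      = 2 * (p + (starRingEnd ℂ) q) * ((p + 1)⁻¹ * ((starRingEnd ℂ) q + 1)⁻¹) := by
    rw [hconjq]
    field_simp
    ring
  rw [hE]
  have hconjw : (starRingEnd ℂ) (q - ((lam:ℂ))⁻¹ * w)
      = (starRingEnd ℂ) q - ((lam:ℂ))⁻¹ * (starRingEnd ℂ) w := by
    simp [map_sub, map_mul, map_inv₀, Complex.conj_ofReal]
  rw [hconjw, show (starRingEnd ℂ) ((q + 1)⁻¹) = ((starRingEnd ℂ) q + 1)⁻¹ by
    simp [map_inv₀]]
  field_simp
  ring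

/-- If `φ(z) - λ⁻¹ z` has nonnegative real part on `ℍ` for some `λ > 0`, then
`1/(z + conj w) - λ⁻¹/(φ(z) + conj φ(w))` is a positive kernel on `ℍ`. -/
theorem kernel_difference_pos (φ : ℂ → ℂ) (hmaps : MapsTo φ RHP RHP)
    (hol : DifferentiableOn ℂ φ RHP) (lam : ℝ) (hlam : 0 < lam)
    (h : ∀ z ∈ RHP, 0 ≤ (φ z - ((lam : ℂ))⁻¹ * z).re) :
    IsPosKernel (fun z w : RHP =>
      1 / ((z : ℂ) + (starRingEnd ℂ) (w : ℂ)) -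
        ((lam : ℂ))⁻¹ / (φ z + (starRingEnd ℂ) (φ w))) := by
  intro n c x
  set ψ : ℂ → ℂ := fun ζ => φ ζ - ((lam : ℂ))⁻¹ * ζ with hψdef
  have hψdiff : DifferentiableOn ℂ ψ RHP :=
    hol.sub ((differentiable_id.const_mul _).differentiableOn)
  set z : Fin n → ℂ := fun i => ((x i : ℂ)) with hzdef
  have hz : ∀ i, 0 < (z i).re := fun i => (x i).2
  set p : Fin n → ℂ := fun i => φ (z i) with hpdef
  have hp : ∀ i, 0 < (p i).re := fun i => hmaps (x i).2
  set g : Fin n → ℂ := fun i => (p i + 1)⁻¹ with hgdef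
  set u : Fin n → ℂ := fun i => (p i - 1) * (p i + 1)⁻¹ with hudef
  have hu : ∀ i, ‖u i‖ < 1 := by
    intro i
    have hp1 : p i + 1 ≠ 0 := by
      apply _root_.ne_zero_of_re_pos; simp [Complex.add_re]; linarith [hp i]
    have hlt : ‖p i - 1‖ < ‖p i + 1‖ := by
      refine lt_of_pow_lt_pow_left₀ 2 (norm_nonneg _) ?_
      rw [Complex.sq_norm, Complex.sq_norm,
        Complex.normSq_apply, Complex.normSq_apply]
      simp only [Complex.add_re, Complex.add_im, Complex.sub_re, Complex.sub_im,
        Complex.one_re, Complex.one_im]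
      nlinarith [hp i]
    rw [hudef]
    simp only [norm_mul, norm_inv]
    rw [← div_eq_mul_inv, div_lt_one (lt_of_le_of_lt (norm_nonneg _) hlt)]
    exact hlt
  have huu : ∀ i j, ‖u i * (starRingEnd ℂ) (u j)‖ < 1 := by
    intro i j
    rw [norm_mul, RCLike.norm_conj]
    nlinarith [hu i, hu j, norm_nonneg (u i), norm_nonneg (u j)]
  set N : Fin n → Fin n → ℂ := fun i j =>
    (ψ (z i) + (starRingEnd ℂ) (ψ (z j))) / (z i + (starRingEnd ℂ) (z j)) with hNdef
  set c' : ℕ → Fin n → ℂ := fun m i => c i * g i * (u i) ^ m with hcdef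
  set f : ℕ → ℂ := fun m => ∑ i, ∑ j,
      ((2:ℝ):ℂ) * (c' m i * (starRingEnd ℂ) (c' m j) * N i j) with hfdef
  -- termwise HasSum
  have hterm : ∀ i j, HasSum (fun m : ℕ => ((2:ℝ):ℂ) * (c' m i * (starRingEnd ℂ) (c' m j) * N i j))
      (c i * (starRingEnd ℂ) (c j) *
        (1 / (z i + (starRingEnd ℂ) (z j)) - ((lam : ℂ))⁻¹ / (p i + (starRingEnd ℂ) (p j)))) := by
    intro i j
    have hgeom := (hasSum_geometric_of_norm_lt_one (huu i j)).mul_left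
      (c i * (starRingEnd ℂ) (c j) * N i j * (2 * g i * (starRingEnd ℂ) (g j)))
    have hfun : (fun m : ℕ => (c i * (starRingEnd ℂ) (c j) * N i j *
        (2 * g i * (starRingEnd ℂ) (g j))) * (u i * (starRingEnd ℂ) (u j)) ^ m)
        = fun m : ℕ => ((2:ℝ):ℂ) * (c' m i * (starRingEnd ℂ) (c' m j) * N i j) := by
      funext m
      rw [hcdef]
      simp only [map_mul, map_pow, mul_pow]
      push_cast
      ring
    rw [hfun] at hgeom
    convert hgeom using 1
    · rfl
    have hpair := pair_id hlam (hz i) (hz j) (hp i) (hp j)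
    rw [hgdef, hudef]
    rw [show (1 - (u i * (starRingEnd ℂ) (u j)))⁻¹ =
      (1 - ((p i - 1) * (p i + 1)⁻¹) * (starRingEnd ℂ) ((p j - 1) * (p j + 1)⁻¹))⁻¹ from by
        rw [hudef]]
    rw [← hpair, hNdef, hψdef]
    ring
  have hsum : HasSum f (∑ i, ∑ j, c i * (starRingEnd ℂ) (c j) *
      (1 / (z i + (starRingEnd ℂ) (z j)) - ((lam : ℂ))⁻¹ / (p i + (starRingEnd ℂ) (p j)))) := by
    rw [hfdef]
    exact hasSum_sum (fun i _ => hasSum_sum (fun j _ => hterm i j))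
  have hf_pos : ∀ m, 0 ≤ (f m).re ∧ (f m).im = 0 := by
    intro m
    have hH := herglotz_pos hψdiff h (c' m) z (fun i => (x i).2)
    have hfm : f m = ((2:ℝ):ℂ) * ∑ i, ∑ j, c' m i * (starRingEnd ℂ) (c' m j) * N i j := by
      rw [hfdef, Finset.mul_sum]
      refine Finset.sum_congr rfl (fun i _ => ?_)
      rw [Finset.mul_sum]
    constructor
    · rw [hfm, Complex.re_ofReal_mul]
      exact mul_nonneg (by norm_num) hH.1
    · rw [hfm, Complex.im_ofReal_mul, hH.2, mul_zero]
  have hT : (∑ i, ∑ j, c i * (starRingEnd ℂ) (c j) *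
      (1 / ((x i : ℂ) + (starRingEnd ℂ) ((x j : ℂ))) -
        ((lam : ℂ))⁻¹ / (φ (x i) + (starRingEnd ℂ) (φ (x j)))))
      = ∑ i, ∑ j, c i * (starRingEnd ℂ) (c j) *
      (1 / (z i + (starRingEnd ℂ) (z j)) - ((lam : ℂ))⁻¹ / (p i + (starRingEnd ℂ) (p j))) := rfl
  constructor
  · rw [hT]
    have hre : HasSum (fun m => (f m).re) (∑ i, ∑ j, c i * (starRingEnd ℂ) (c j) *
        (1 / (z i + (starRingEnd ℂ) (z j)) - ((lam : ℂ))⁻¹ /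
          (p i + (starRingEnd ℂ) (p j)))).re := by
      have := Complex.reCLM.hasSum hsum
      simpa using this
    exact hre.nonneg (fun m => (hf_pos m).1)
  · rw [hT]
    have him : HasSum (fun m => (f m).im) (∑ i, ∑ j, c i * (starRingEnd ℂ) (c j) *
        (1 / (z i + (starRingEnd ℂ) (z j)) - ((lam : ℂ))⁻¹ /
          (p i + (starRingEnd ℂ) (p j)))).im := by
      have := Complex.imCLM.hasSum hsum
      simpa using this
    rw [show (fun m => (f m).im) = fun _ => (0:ℝ) from funext (fun m => (hf_pos m).2)] at him
    exact him.unique hasSum_zero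

end
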